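/- Let R = (Z/2Z)^{⊕ω} (finitely supported sequences, pointwise ring operations). For every finite index subgroup H of (R,+), the set R·H = {r·h : r ∈ R, h ∈ H} contains an ideal of R of finite index. -/

import Mathlib

open Pointwise

/-- For R = (Z/2Z)^{⊕ω} (finitely supported sequences, pointwise operations) and
any finite index additive subgroup H, the set R·H contains an ideal of R of
finite additive index. -/
theorem stmt_15 (H : AddSubgroup (ℕ →₀ ZMod 2)) (hH : H.FiniteIndex) :
    ∃ I : AddSubgroup (ℕ →₀ ZMod 2),
      (∀ r x : ℕ →₀ ZMod 2, x ∈ I → r * x ∈ I ∧ x * r ∈ I) ∧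
      I.FiniteIndex ∧
      (I : Set (ℕ →₀ ZMod 2)) ⊆ Set.univ * (H : Set (ℕ →₀ ZMod 2)) := by
  classical
  set R := ℕ →₀ ZMod 2
  haveI : Finite (R ⧸ H) := AddSubgroup.finite_quotient_of_finiteIndex (H := H)
  haveI : Fintype (R ⧸ H) := Fintype.ofFinite _
  set N : ℕ := (Finset.univ : Finset (R ⧸ H)).sup
      (fun c => (Quotient.out c).support.sup id) + 1 with hN
  have hout : ∀ c : R ⧸ H, ∀ i, N ≤ i → (Quotient.out c) i = 0 := by
    intro c i hi
    by_contra h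
    have hmem : i ∈ (Quotient.out c).support := Finsupp.mem_support_iff.mpr h
    have : i ≤ (Finset.univ : Finset (R ⧸ H)).sup
        (fun c => (Quotient.out c).support.sup id) :=
      le_trans (Finset.le_sup (f := id) hmem)
        (Finset.le_sup (f := fun c => (Quotient.out c).support.sup id) (Finset.mem_univ c))
    omega
  set φ : R →+ (Fin N → ZMod 2) :=
    { toFun := fun x => fun i => x i
      map_zero' := by funext i; rfl
      map_add' := by intro a b; funext i; exact Finsupp.add_apply a b i } with hφ
  have hker : ∀ x : R, x ∈ φ.ker ↔ (∀ i < N, x i = 0) := by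
    intro x
    rw [AddMonoidHom.mem_ker]
    constructor
    · intro h i hi
      exact congrFun h ⟨i, hi⟩
    · intro h
      funext i
      exact h i i.isLt
  refine ⟨φ.ker, ?_, ?_, ?_⟩
  · intro r x hx
    rw [hker] at hx
    constructor
    · rw [hker]; intro i hi; rw [Finsupp.mul_apply, hx i hi, mul_zero]
    · rw [hker]; intro i hi; rw [Finsupp.mul_apply, hx i hi, zero_mul]
  · exact AddSubgroup.finiteIndex_ker φ
  · intro x hx
    have hx' : ∀ i < N, x i = 0 := (hker x).mp hx
    set q : R →+ R ⧸ H := QuotientAddGroup.mk' H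
    set y : R := Quotient.out (q x) with hy
    have hqy : q y = q x := Quotient.out_eq (q x)
    have hxy : x + y ∈ H := by
      have h0 : q (x + y) = 0 := by
        rw [map_add, hqy]
        have hx2 : x + x = 0 := by
          ext i
          rw [Finsupp.add_apply]
          exact CharTwo.add_self_eq_zero (x i)
        calc q x + q x = q (x + x) := (map_add q x x).symm
          _ = 0 := by rw [hx2, map_zero]
      exact (QuotientAddGroup.eq_zero_iff _).mp h0
    refine ⟨x, Set.mem_univ x, x + y, hxy, ?_⟩
    ext i
    rw [Finsupp.mul_apply, Finsupp.add_apply]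
    by_cases hi : i < N
    · rw [hx' i hi, zero_mul]
    · have hyi : y i = 0 := hout (q x) i (not_lt.mp hi)
      rw [hyi, add_zero]
      have hid : ∀ a : ZMod 2, a * a = a := by decide
      exact hid (x i)
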